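/- Let α ∈ ℝ, let β > 0 be not an integer, let γ ∈ ℝ, and let f ∈ ℝ[[X,Y]] be the unique bivariate formal power series with zero constant coefficient and Y-coefficient γ satisfying X·∂f/∂X + β·Y·∂f/∂Y − β·f + β·f² + α·X = 0. Then f is rational of degree at most one in Y: there exist univariate formal power series A_0, A_1, B_0, B_1 ∈ ℝ[[X]], with A_0 having zero constant term and B_0 having constant term 1, such that f·(B_0 + Y·B_1) = A_0 + Y·A_1 in ℝ[[X,Y]]. (This is the structural content of the paper's rational form (riccrat) of the Riccati solution, equivalently the fact behind the identity w^R_{n,m} = w^R_{n,1} for m ≥ 1.) -/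

import Mathlib

noncomputable def eulerOp (β : ℝ) (f : MvPowerSeries (Fin 2) ℝ) : MvPowerSeries (Fin 2) ℝ :=
  fun d => (((d 0 : ℕ) : ℝ) + β * ((d 1 : ℕ) : ℝ)) * MvPowerSeries.coeff (R := ℝ) d f

noncomputable def embX (p : PowerSeries ℝ) : MvPowerSeries (Fin 2) ℝ :=
  fun d => if d 1 = 0 then PowerSeries.coeff (R := ℝ) (d 0) p else 0

open MvPowerSeries Finsupp

lemma coeff_eulerOp (β : ℝ) (a : MvPowerSeries (Fin 2) ℝ) (d : Fin 2 →₀ ℕ) :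
    coeff (R := ℝ) d (eulerOp β a) = (((d 0 : ℕ) : ℝ) + β * ((d 1 : ℕ) : ℝ)) * coeff (R := ℝ) d a := rfl

lemma coeff_embX (p : PowerSeries ℝ) (d : Fin 2 →₀ ℕ) :
    coeff (R := ℝ) d (embX p) = if d 1 = 0 then PowerSeries.coeff (R := ℝ) (d 0) p else 0 := rfl

lemma euler_sub (β : ℝ) (a b : MvPowerSeries (Fin 2) ℝ) :
    eulerOp β (a - b) = eulerOp β a - eulerOp β b := by
  ext d
  simp only [coeff_eulerOp, map_sub]
  ring

lemma euler_C_mul (β r : ℝ) (a : MvPowerSeries (Fin 2) ℝ) :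
    eulerOp β (C (σ := Fin 2) (R := ℝ) r * a) = C (σ := Fin 2) (R := ℝ) r * eulerOp β a := by
  ext d
  simp only [coeff_eulerOp, coeff_C_mul]
  ring

lemma euler_mul (β : ℝ) (a b : MvPowerSeries (Fin 2) ℝ) :
    eulerOp β (a * b) = eulerOp β a * b + a * eulerOp β b := by
  ext d
  simp only [coeff_eulerOp, map_add, coeff_mul, Finset.mul_sum, ← Finset.sum_add_distrib]
  refine Finset.sum_congr rfl fun p hp => ?_
  rw [Finset.HasAntidiagonal.mem_antidiagonal] at hp
  have h0 : (p.1 0 : ℝ) + p.2 0 = ((d 0 : ℕ) : ℝ) := by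
    rw [← hp]; push_cast [Finsupp.add_apply]; ring
  have h1 : (p.1 1 : ℝ) + p.2 1 = ((d 1 : ℕ) : ℝ) := by
    rw [← hp]; push_cast [Finsupp.add_apply]; ring
  rw [← h0, ← h1]
  ring

lemma coeff_X1_mul (q : MvPowerSeries (Fin 2) ℝ) (d : Fin 2 →₀ ℕ) :
    coeff (R := ℝ) d (X 1 * q) =
      if d 1 = 0 then 0 else coeff (R := ℝ) (d - Finsupp.single 1 1) q := by
  rw [X_def, coeff_monomial_mul]
  by_cases h : d 1 = 0
  · rw [if_neg, if_pos h]
    intro hle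
    have := Finsupp.single_le_iff.mp hle
    omega
  · rw [if_pos (Finsupp.single_le_iff.mpr (by omega)), if_neg h, one_mul]

lemma coeff_X0_mul (q : MvPowerSeries (Fin 2) ℝ) (d : Fin 2 →₀ ℕ) :
    coeff (R := ℝ) d (X 0 * q) =
      if d 0 = 0 then 0 else coeff (R := ℝ) (d - Finsupp.single 0 1) q := by
  rw [X_def, coeff_monomial_mul]
  by_cases h : d 0 = 0
  · rw [if_neg, if_pos h]
    intro hle
    have := Finsupp.single_le_iff.mp hle
    omega
  · rw [if_pos (Finsupp.single_le_iff.mpr (by omega)), if_neg h, one_mul]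

lemma sub1_apply0 (d : Fin 2 →₀ ℕ) : (d - Finsupp.single 1 1 : Fin 2 →₀ ℕ) 0 = d 0 := by
  rw [Finsupp.tsub_apply, Finsupp.single_apply, if_neg (by decide)]
  omega

lemma sub1_apply1 (d : Fin 2 →₀ ℕ) : (d - Finsupp.single 1 1 : Fin 2 →₀ ℕ) 1 = d 1 - 1 := by
  rw [Finsupp.tsub_apply, Finsupp.single_apply, if_pos rfl]

lemma sub0_apply0 (d : Fin 2 →₀ ℕ) : (d - Finsupp.single 0 1 : Fin 2 →₀ ℕ) 0 = d 0 - 1 := by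
  rw [Finsupp.tsub_apply, Finsupp.single_apply, if_pos rfl]

lemma sub0_apply1 (d : Fin 2 →₀ ℕ) : (d - Finsupp.single 0 1 : Fin 2 →₀ ℕ) 1 = d 1 := by
  rw [Finsupp.tsub_apply, Finsupp.single_apply, if_neg (by decide)]
  omega

lemma coeff_comb (p q : PowerSeries ℝ) (d : Fin 2 →₀ ℕ) :
    coeff (R := ℝ) d (embX p + X 1 * embX q) =
      if d 1 = 0 then PowerSeries.coeff (R := ℝ) (d 0) p
      else if d 1 = 1 then PowerSeries.coeff (R := ℝ) (d 0) q else 0 := by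
  rw [map_add, coeff_embX, coeff_X1_mul]
  by_cases h : d 1 = 0
  · simp [h]
  · rw [if_neg h, if_neg h, coeff_embX, sub1_apply0, sub1_apply1, zero_add]
    by_cases h1 : d 1 = 1
    · simp [h, h1]
    · simp [h, h1, show ¬(d 1 - 1 = 0) by omega]

lemma fin2_eq_zero (e : Fin 2 →₀ ℕ) (h0 : e 0 = 0) (h1 : e 1 = 0) : e = 0 := by
  ext i
  fin_cases i <;> simpa

lemma fin2_eq_single11 (d : Fin 2 →₀ ℕ) (h0 : d 0 = 0) (h1 : d 1 = 1) :
    d = Finsupp.single 1 1 := by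
  ext i
  fin_cases i <;> simp_all [Finsupp.single_apply]

lemma single11_apply0 : (Finsupp.single 1 1 : Fin 2 →₀ ℕ) 0 = 0 := by
  simp [Finsupp.single_apply]

lemma single11_apply1 : (Finsupp.single 1 1 : Fin 2 →₀ ℕ) 1 = 1 := by
  simp

noncomputable def b0seq (α β : ℝ) : ℕ → ℝ
  | 0 => 1
  | n + 1 => -(α * β) / (((n : ℝ) + 1) * (((n : ℝ) + 1) - β)) * b0seq α β n

noncomputable def b1seq (α β γ : ℝ) : ℕ → ℝ
  | 0 => γ
  | n + 1 => -(α * β) / ((((n : ℝ) + 1) + β) * ((n : ℝ) + 1)) * b1seq α β γ n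

theorem riccati_bivariate_rational (α β : ℝ) (hβpos : 0 < β) (hβ : ∀ k : ℤ, β ≠ (k : ℝ))
    (γ : ℝ) (f : MvPowerSeries (Fin 2) ℝ)
    (hf0 : MvPowerSeries.coeff (R := ℝ) 0 f = 0)
    (hfγ : MvPowerSeries.coeff (R := ℝ) (Finsupp.single 1 1) f = γ)
    (hfeq : eulerOp β f - MvPowerSeries.C (σ := Fin 2) (R := ℝ) β * f
        + MvPowerSeries.C (σ := Fin 2) (R := ℝ) β * f ^ 2
        + MvPowerSeries.C (σ := Fin 2) (R := ℝ) α * MvPowerSeries.X 0 = 0) :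
    ∃ A₀ A₁ B₀ B₁ : PowerSeries ℝ,
      PowerSeries.constantCoeff (R := ℝ) A₀ = 0 ∧
      PowerSeries.constantCoeff (R := ℝ) B₀ = 1 ∧
      f * (embX B₀ + MvPowerSeries.X 1 * embX B₁) =
        embX A₀ + MvPowerSeries.X 1 * embX A₁ := by
  have hβ0 : β ≠ 0 := ne_of_gt hβpos
  have hβnat : ∀ n : ℕ, β ≠ (n : ℝ) := fun n => by
    have := hβ (n : ℤ); push_cast at this; exact this
  -- recurrences
  have b0rec : ∀ n : ℕ, (((n : ℝ) + 1) * (((n : ℝ) + 1) - β)) * b0seq α β (n + 1)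
      = -(α * β) * b0seq α β n := by
    intro n
    have h1 : ((n : ℝ) + 1) ≠ 0 := by positivity
    have h2 : (((n : ℝ) + 1) - β) ≠ 0 := sub_ne_zero.mpr (fun h => hβnat (n + 1) (by push_cast; linarith))
    rw [b0seq]
    field_simp
  have b1rec : ∀ n : ℕ, ((((n : ℝ) + 1) + β) * ((n : ℝ) + 1)) * b1seq α β γ (n + 1)
      = -(α * β) * b1seq α β γ n := by
    intro n
    have h1 : ((n : ℝ) + 1) ≠ 0 := by positivity
    have h2 : (((n : ℝ) + 1) + β) ≠ 0 := by positivity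
    rw [b1seq]
    field_simp
  set B₀ : PowerSeries ℝ := PowerSeries.mk (b0seq α β) with hB₀
  set B₁ : PowerSeries ℝ := PowerSeries.mk (b1seq α β γ) with hB₁
  set g : MvPowerSeries (Fin 2) ℝ := embX B₀ + X 1 * embX B₁ with hgdef
  have hG : ∀ d : Fin 2 →₀ ℕ, coeff (R := ℝ) d g =
      if d 1 = 0 then b0seq α β (d 0) else if d 1 = 1 then b1seq α β γ (d 0) else 0 := by
    intro d
    rw [hgdef, coeff_comb, hB₀, hB₁]
    simp [PowerSeries.coeff_mk]
  -- the linear ODE for g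
  have hE2 : eulerOp β (eulerOp β g) = C (σ := Fin 2) (R := ℝ) β * eulerOp β g
      - C (σ := Fin 2) (R := ℝ) (α * β) * (X 0 * g) := by
    ext d
    rw [map_sub, coeff_eulerOp, coeff_eulerOp, coeff_C_mul, coeff_eulerOp, coeff_C_mul,
      coeff_X0_mul, hG d]
    rcases h1 : d 1 with _ | _ | m'
    · rcases h0 : d 0 with _ | n
      · simp
      · rw [if_pos rfl, if_neg (by omega), hG _, sub0_apply0, sub0_apply1, h0, h1,
          if_pos rfl, Nat.add_sub_cancel]
        have hr := b0rec n
        push_cast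
        linear_combination hr
    · rcases h0 : d 0 with _ | n
      · rw [if_neg (by omega), if_pos rfl, if_pos rfl]
        push_cast
        ring
      · rw [if_neg (by omega), if_pos rfl, if_neg (by omega), hG _, sub0_apply0,
          sub0_apply1, h0, h1, if_neg (by omega), if_pos rfl, Nat.add_sub_cancel]
        have hr := b1rec n
        push_cast
        linear_combination hr
    · rw [if_neg (by omega), if_neg (by omega)]
      by_cases h0 : d 0 = 0
      · simp [h0]
      · rw [if_neg h0, hG _, sub0_apply1, h1, if_neg (by omega), if_neg (by omega)]
        ring
  -- the Riccati equation as an expression for eulerOp β f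
  have hEf : eulerOp β f = C (σ := Fin 2) (R := ℝ) β * f - C (σ := Fin 2) (R := ℝ) β * f ^ 2
      - C (σ := Fin 2) (R := ℝ) α * X 0 := by linear_combination hfeq
  set D : MvPowerSeries (Fin 2) ℝ := eulerOp β g - C (σ := Fin 2) (R := ℝ) β * (f * g) with hDdef
  have hDeq : eulerOp β D - C (σ := Fin 2) (R := ℝ) β * D + C (σ := Fin 2) (R := ℝ) β * (f * D) = 0 := by
    rw [hDdef, euler_sub, euler_C_mul, euler_mul, hE2, hEf,
      show C (σ := Fin 2) (R := ℝ) (α * β) = C (σ := Fin 2) (R := ℝ) α * C (σ := Fin 2) (R := ℝ) β from map_mul _ _ _]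
    ring
  have hfD : ∀ d : Fin 2 →₀ ℕ,
      (((d 0 : ℕ) : ℝ) + β * ((d 1 : ℕ) : ℝ) - β) * coeff (R := ℝ) d D + β * coeff (R := ℝ) d (f * D) = 0 := by
    intro d
    have h := congrArg (coeff (R := ℝ) d) hDeq
    simp only [map_add, map_sub, coeff_eulerOp, coeff_C_mul, map_zero] at h
    linear_combination h
  have hwne : ∀ d : Fin 2 →₀ ℕ, d ≠ Finsupp.single 1 1 →
      (((d 0 : ℕ) : ℝ) + β * ((d 1 : ℕ) : ℝ) - β) ≠ 0 := by
    intro d hd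
    rcases h1 : d 1 with _ | _ | m'
    · push_cast [h1]
      intro h
      exact hβnat (d 0) (by linarith)
    · have h0 : d 0 ≠ 0 := fun h0 => hd (fin2_eq_single11 d h0 (by omega))
      push_cast [h1]
      intro h
      have : ((d 0 : ℕ) : ℝ) = 0 := by linarith
      exact h0 (by exact_mod_cast this)
    · push_cast [h1]
      nlinarith [Nat.cast_nonneg (α := ℝ) (d 0), Nat.cast_nonneg (α := ℝ) m', hβpos]
  have hD11 : coeff (R := ℝ) (Finsupp.single 1 1) D = 0 := by
    rw [hDdef, map_sub, coeff_eulerOp, coeff_C_mul, single11_apply0, single11_apply1, hG _,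
      single11_apply0, single11_apply1]
    rw [if_neg (by omega), if_pos rfl]
    have hfg : coeff (R := ℝ) (Finsupp.single 1 1) (f * g) = γ := by
      rw [coeff_mul, Finsupp.antidiagonal_single, Finset.sum_map]
      have : Finset.HasAntidiagonal.antidiagonal (1 : ℕ) = {(0, 1), (1, 0)} := by decide
      rw [this]
      rw [Finset.sum_insert (by decide), Finset.sum_singleton]
      simp only [Function.Embedding.coe_prodMap, Function.Embedding.coeFn_mk, Prod.map_apply]
      rw [Finsupp.single_zero, show coeff (R := ℝ) (0 : Fin 2 →₀ ℕ) f = 0 from hf0, zero_mul, zero_add,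
        hfγ, hG 0]
      simp [b0seq]
    rw [hfg]
    simp [b1seq]
  have hDall : ∀ N : ℕ, ∀ d : Fin 2 →₀ ℕ, d 0 + d 1 ≤ N → coeff (R := ℝ) d D = 0 := by
    intro N
    induction N with
    | zero =>
      intro d hd
      have h0 : d 0 = 0 := by omega
      have h1 : d 1 = 0 := by omega
      have hdz : d = 0 := fin2_eq_zero d h0 h1
      have h := hfD d
      have hfD0 : coeff (R := ℝ) d (f * D) = 0 := by
        rw [hdz, coeff_mul, Finsupp.antidiagonal_zero, Finset.sum_singleton, hf0, zero_mul]
      rw [hfD0, mul_zero, add_zero, mul_eq_zero] at h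
      rcases h with h | h
      · exfalso
        rw [h0, h1] at h
        push_cast at h
        exact hβ0 (by linarith)
      · exact h
    | succ N IH =>
      intro d hd
      by_cases hds : d = Finsupp.single 1 1
      · rw [hds]; exact hD11
      · have h := hfD d
        have hsum : coeff (R := ℝ) d (f * D) = 0 := by
          rw [coeff_mul]
          apply Finset.sum_eq_zero
          intro p hp
          rw [Finset.HasAntidiagonal.mem_antidiagonal] at hp
          by_cases hp1 : p.1 = 0
          · rw [hp1, hf0, zero_mul]
          · have e0 : p.1 0 + p.2 0 = d 0 := by rw [← hp]; simp [Finsupp.add_apply]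
            have e1 : p.1 1 + p.2 1 = d 1 := by rw [← hp]; simp [Finsupp.add_apply]
            have hne : p.1 0 ≠ 0 ∨ p.1 1 ≠ 0 := by
              by_contra hc
              push_neg at hc
              exact hp1 (fin2_eq_zero p.1 hc.1 hc.2)
            have hle : p.2 0 + p.2 1 ≤ N := by omega
            rw [IH p.2 hle, mul_zero]
        rw [hsum, mul_zero, add_zero, mul_eq_zero] at h
        exact h.resolve_left (hwne d hds)
  have hDzero : D = 0 := by
    ext d
    rw [map_zero]
    exact hDall (d 0 + d 1) d le_rfl
  have hkey : ∀ d : Fin 2 →₀ ℕ,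
      β * coeff (R := ℝ) d (f * g) = (((d 0 : ℕ) : ℝ) + β * ((d 1 : ℕ) : ℝ)) * coeff (R := ℝ) d g := by
    intro d
    have h := hDall (d 0 + d 1) d le_rfl
    rw [hDdef] at h
    simp only [map_sub, coeff_eulerOp, coeff_C_mul] at h
    linarith [sub_eq_zero.mp h]
  refine ⟨PowerSeries.mk (fun n => (n : ℝ) * b0seq α β n / β),
    PowerSeries.mk (fun n => ((n : ℝ) + β) * b1seq α β γ n / β), B₀, B₁, ?_, ?_, ?_⟩
  · simp [PowerSeries.constantCoeff_mk]
  · rw [hB₀]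
    simp [PowerSeries.constantCoeff_mk, b0seq]
  · rw [← hgdef]
    ext d
    rw [coeff_comb]
    have h := hkey d
    rw [hG d] at h
    simp only [PowerSeries.coeff_mk]
    rcases h1 : d 1 with _ | _ | m'
    · rw [h1] at h
      rw [if_pos rfl] at h ⊢
      push_cast at h
      field_simp
      linarith [h]
    · rw [h1] at h
      rw [if_neg (by omega), if_pos rfl] at h ⊢
      push_cast at h
      field_simp
      linarith [h]
    · rw [h1] at h
      rw [if_neg (by omega), if_neg (by omega)] at h ⊢
      rw [mul_zero] at h
      have := mul_eq_zero.mp h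
      tauto
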